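/- Assume R_0u = b_f φ_u ψ/((μ_a+ψ)μ_fu) > 1 and R_0 = sqrt(v_w (φ_w/μ_fw)(μ_fu/φ_u)) < 1. Then every eigenvalue (over ℂ) of the derivative (6×6 Jacobian matrix) of the Wolbachia mosquito model vector field, evaluated at the disease-free equilibrium (A_u⁰, 0, F_u⁰, 0, M_u⁰, 0) with A_u⁰ = K_a(1 − 1/R_0u), F_u⁰ = b_f ψ A_u⁰/μ_fu, M_u⁰ = b_m ψ A_u⁰/μ_mu, has negative real part (so the disease-free equilibrium is locally asymptotically stable). -/

import Mathlib

/-- The Wolbachia mosquito model vector field on states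
`x = (A_u, A_w, F_u, F_w, M_u, M_w)` (indices 0..5). -/
noncomputable def wolbField (bf vw φu φw ψ μa μfu μfw μmu μmw Ka : ℝ)
    (x : Fin 6 → ℝ) : Fin 6 → ℝ :=
  ![ φu * x 2 * (x 4 / (x 4 + x 5)) * (1 - (x 0 + x 1) / Ka)
      + (1 - vw) * (φw * x 3 * (x 4 / (x 4 + x 5)) * (1 - (x 0 + x 1) / Ka)
          + φw * x 3 * (1 - x 4 / (x 4 + x 5)) * (1 - (x 0 + x 1) / Ka))
      - (μa + ψ) * x 0,
    vw * (φw * x 3 * (x 4 / (x 4 + x 5)) * (1 - (x 0 + x 1) / Ka)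
          + φw * x 3 * (1 - x 4 / (x 4 + x 5)) * (1 - (x 0 + x 1) / Ka))
      - (μa + ψ) * x 1,
    bf * ψ * x 0 - μfu * x 2,
    bf * ψ * x 1 - μfw * x 3,
    (1 - bf) * ψ * x 0 - μmu * x 4,
    (1 - bf) * ψ * x 1 - μmw * x 5 ]


lemma quad_root_re_neg (p q : ℝ) (hp : 0 < p) (hq : 0 < q) (z : ℂ)
    (hz : z^2 + (p:ℂ)*z + (q:ℂ) = 0) : z.re < 0 := by
  set x := z.re; set y := z.im
  have hre : x^2 - y^2 + p*x + q = 0 := by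
    have := congrArg Complex.re hz
    simp [Complex.add_re, Complex.mul_re, pow_two, x, y] at this
    linear_combination this
  have him : 2*x*y + p*y = 0 := by
    have := congrArg Complex.im hz
    simp [Complex.add_im, Complex.mul_im, pow_two, x, y] at this
    linear_combination this
  by_contra h
  push_neg at h
  have hy2 : y^2 * (2*x + p) = 0 := by nlinarith [him]
  have h2xp : 0 < 2*x + p := by linarith
  have hy : y = 0 := by
    rcases mul_eq_zero.1 hy2 with h'|h'
    · exact pow_eq_zero_iff (n := 2) (by norm_num) |>.1 h'
    · linarith
  nlinarith [hre, hy]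

lemma lin_root_re_neg (μ : ℝ) (hμ : 0 < μ) (z : ℂ) (hz : z + (μ:ℂ) = 0) : z.re < 0 := by
  have := congrArg Complex.re hz
  simp at this
  linarith


open Matrix Polynomial

lemma charpoly_eval_fin3 (B : Matrix (Fin 3) (Fin 3) ℂ) (z : ℂ) :
    B.charpoly.eval z =
      (z - B 0 0) * (z - B 1 1) * (z - B 2 2)
      - (z - B 0 0) * (B 1 2 * B 2 1)
      - B 0 1 * B 1 0 * (z - B 2 2)
      - B 0 1 * (B 1 2 * B 2 0)
      - B 0 2 * (B 1 0 * B 2 1)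
      - B 0 2 * ((z - B 1 1) * B 2 0) := by
  have h := RingHom.map_det (Polynomial.evalRingHom z) (Matrix.charmatrix B)
  rw [Matrix.charpoly, ← Polynomial.coe_evalRingHom]
  rw [h, Matrix.det_fin_three]
  simp [Matrix.charmatrix_apply, Matrix.map_apply, Matrix.diagonal_apply]
  ring

def e6 : Fin 3 ⊕ Fin 3 ≃ Fin 6 where
  toFun := Sum.elim ![1,3,5] ![0,2,4]
  invFun := ![Sum.inr 0, Sum.inl 0, Sum.inr 1, Sum.inl 1, Sum.inr 2, Sum.inl 2]
  left_inv := by decide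
  right_inv := by decide





section vec6
variable {α : Type*} (a b c d e f : α)
@[simp] lemma v6_0 : (![a,b,c,d,e,f] : Fin 6 → α) 0 = a := rfl
@[simp] lemma v6_1 : (![a,b,c,d,e,f] : Fin 6 → α) 1 = b := rfl
@[simp] lemma v6_2 : (![a,b,c,d,e,f] : Fin 6 → α) 2 = c := rfl
@[simp] lemma v6_3 : (![a,b,c,d,e,f] : Fin 6 → α) 3 = d := rfl
@[simp] lemma v6_4 : (![a,b,c,d,e,f] : Fin 6 → α) 4 = e := rfl
@[simp] lemma v6_5 : (![a,b,c,d,e,f] : Fin 6 → α) 5 = f := rfl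
@[simp] lemma v6m_0 (h : 0 < 6) : (![a,b,c,d,e,f] : Fin 6 → α) ⟨0,h⟩ = a := rfl
@[simp] lemma v6m_1 (h : 1 < 6) : (![a,b,c,d,e,f] : Fin 6 → α) ⟨1,h⟩ = b := rfl
@[simp] lemma v6m_2 (h : 2 < 6) : (![a,b,c,d,e,f] : Fin 6 → α) ⟨2,h⟩ = c := rfl
@[simp] lemma v6m_3 (h : 3 < 6) : (![a,b,c,d,e,f] : Fin 6 → α) ⟨3,h⟩ = d := rfl
@[simp] lemma v6m_4 (h : 4 < 6) : (![a,b,c,d,e,f] : Fin 6 → α) ⟨4,h⟩ = e := rfl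
@[simp] lemma v6m_5 (h : 5 < 6) : (![a,b,c,d,e,f] : Fin 6 → α) ⟨5,h⟩ = f := rfl
end vec6


open ContinuousLinearMap in
lemma jac (bf vw φu φw ψ μa μfu μfw μmu μmw Ka Au0 F Mm : ℝ)
    (hKa : Ka ≠ 0) (hMm : Mm ≠ 0) :
    HasFDerivAt (wolbField bf vw φu φw ψ μa μfu μfw μmu μmw Ka)
      (LinearMap.toContinuousLinearMap (Matrix.toLin'
        (Matrix.of ![
          ![-(φu*F/Ka) - (μa+ψ), -(φu*F/Ka), φu*(1-Au0/Ka), (1-vw)*(φw*(1-Au0/Ka)), 0,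
            -(φu*F*(1-Au0/Ka)/Mm)],
          ![0, -(μa+ψ), 0, vw*(φw*(1-Au0/Ka)), 0, 0],
          ![bf*ψ, 0, -μfu, 0, 0, 0],
          ![0, bf*ψ, 0, -μfw, 0, 0],
          ![(1-bf)*ψ, 0, 0, 0, -μmu, 0],
          ![0, (1-bf)*ψ, 0, 0, 0, -μmw]])))
      (![Au0, 0, F, 0, Mm, 0]) := by
  set x0 : Fin 6 → ℝ := ![Au0, 0, F, 0, Mm, 0] with hx0
  have h0 := hasFDerivAt_apply (𝕜 := ℝ) (F' := fun _ : Fin 6 => ℝ) 0 x0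
  have h1 := hasFDerivAt_apply (𝕜 := ℝ) (F' := fun _ : Fin 6 => ℝ) 1 x0
  have h2 := hasFDerivAt_apply (𝕜 := ℝ) (F' := fun _ : Fin 6 => ℝ) 2 x0
  have h3 := hasFDerivAt_apply (𝕜 := ℝ) (F' := fun _ : Fin 6 => ℝ) 3 x0
  have h4 := hasFDerivAt_apply (𝕜 := ℝ) (F' := fun _ : Fin 6 => ℝ) 4 x0
  have h5 := hasFDerivAt_apply (𝕜 := ℝ) (F' := fun _ : Fin 6 => ℝ) 5 x0
  have hden := h4.add h5
  have hdne : x0 4 + x0 5 ≠ 0 := by simp [hx0]; exact hMm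
  have hinv := (hasFDerivAt_inv' (𝕜 := ℝ) hdne).comp x0 hden
  have hq := h4.mul hinv
  have h1mq := hq.const_sub 1
  have hr := (((h0.add h1).mul_const Ka⁻¹).const_sub 1)
  have hval : x0 0 = Au0 ∧ x0 1 = 0 ∧ x0 2 = F ∧ x0 3 = 0 ∧ x0 4 = Mm ∧ x0 5 = 0 := by
    refine ⟨rfl, rfl, rfl, rfl, rfl, rfl⟩
  have t1 := ((h2.const_mul φu).mul hq).mul hr
  have t2a := ((h3.const_mul φw).mul hq).mul hr
  have t2b := ((h3.const_mul φw).mul h1mq).mul hr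
  apply hasFDerivAt_pi''
  intro i
  fin_cases i
  · show HasFDerivAt (fun x : Fin 6 → ℝ =>
      φu * x 2 * (x 4 / (x 4 + x 5)) * (1 - (x 0 + x 1) / Ka)
      + (1 - vw) * (φw * x 3 * (x 4 / (x 4 + x 5)) * (1 - (x 0 + x 1) / Ka)
          + φw * x 3 * (1 - x 4 / (x 4 + x 5)) * (1 - (x 0 + x 1) / Ka))
      - (μa + ψ) * x 0) _ x0
    simp only [div_eq_mul_inv]
    have tg := (t2a.add t2b).const_mul (1-vw)
    have c0 := (t1.add tg).sub (h0.const_mul (μa+ψ))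
    refine c0.congr_fderiv ?_
    refine ContinuousLinearMap.ext fun v => ?_
    simp only [ContinuousLinearMap.comp_apply, ContinuousLinearMap.add_apply,
      ContinuousLinearMap.sub_apply, ContinuousLinearMap.smul_apply,
      ContinuousLinearMap.neg_apply, ContinuousLinearMap.mulLeftRight_apply,
      ContinuousLinearMap.proj_apply, smul_eq_mul,
      LinearMap.coe_toContinuousLinearMap', Matrix.toLin'_apply, Matrix.mulVec,
      dotProduct, Fin.sum_univ_six, Matrix.of_apply, hx0,
      v6_0, v6_1, v6_2, v6_3, v6_4, v6_5, v6m_0, v6m_1, v6m_2, v6m_3, v6m_4, v6m_5,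
      Pi.add_apply, Pi.mul_apply, Function.comp_apply, add_zero]
    field_simp
    ring
  · show HasFDerivAt (fun x : Fin 6 → ℝ =>
      vw * (φw * x 3 * (x 4 / (x 4 + x 5)) * (1 - (x 0 + x 1) / Ka)
          + φw * x 3 * (1 - x 4 / (x 4 + x 5)) * (1 - (x 0 + x 1) / Ka))
      - (μa + ψ) * x 1) _ x0
    simp only [div_eq_mul_inv]
    refine (((t2a.add t2b).const_mul vw).sub (h1.const_mul (μa+ψ))).congr_fderiv ?_
    refine ContinuousLinearMap.ext fun v => ?_
    simp only [ContinuousLinearMap.comp_apply, ContinuousLinearMap.add_apply,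
      ContinuousLinearMap.sub_apply, ContinuousLinearMap.smul_apply,
      ContinuousLinearMap.neg_apply, ContinuousLinearMap.mulLeftRight_apply,
      ContinuousLinearMap.proj_apply, smul_eq_mul,
      LinearMap.coe_toContinuousLinearMap', Matrix.toLin'_apply, Matrix.mulVec,
      dotProduct, Fin.sum_univ_six, Matrix.of_apply, hx0,
      v6_0, v6_1, v6_2, v6_3, v6_4, v6_5, v6m_0, v6m_1, v6m_2, v6m_3, v6m_4, v6m_5,
      Pi.add_apply, Pi.mul_apply, Function.comp_apply, add_zero]
    field_simp
    ring
  · show HasFDerivAt (fun x : Fin 6 → ℝ => bf * ψ * x 0 - μfu * x 2) _ x0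
    refine ((h0.const_mul (bf*ψ)).sub (h2.const_mul μfu)).congr_fderiv ?_
    refine ContinuousLinearMap.ext fun v => ?_
    simp only [ContinuousLinearMap.comp_apply, ContinuousLinearMap.add_apply,
      ContinuousLinearMap.sub_apply, ContinuousLinearMap.smul_apply,
      ContinuousLinearMap.neg_apply, ContinuousLinearMap.mulLeftRight_apply,
      ContinuousLinearMap.proj_apply, smul_eq_mul,
      LinearMap.coe_toContinuousLinearMap', Matrix.toLin'_apply, Matrix.mulVec,
      dotProduct, Fin.sum_univ_six, Matrix.of_apply, hx0,
      v6_0, v6_1, v6_2, v6_3, v6_4, v6_5, v6m_0, v6m_1, v6m_2, v6m_3, v6m_4, v6m_5]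
    ring
  · show HasFDerivAt (fun x : Fin 6 → ℝ => bf * ψ * x 1 - μfw * x 3) _ x0
    refine ((h1.const_mul (bf*ψ)).sub (h3.const_mul μfw)).congr_fderiv ?_
    refine ContinuousLinearMap.ext fun v => ?_
    simp only [ContinuousLinearMap.comp_apply, ContinuousLinearMap.add_apply,
      ContinuousLinearMap.sub_apply, ContinuousLinearMap.smul_apply,
      ContinuousLinearMap.neg_apply, ContinuousLinearMap.mulLeftRight_apply,
      ContinuousLinearMap.proj_apply, smul_eq_mul,
      LinearMap.coe_toContinuousLinearMap', Matrix.toLin'_apply, Matrix.mulVec,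
      dotProduct, Fin.sum_univ_six, Matrix.of_apply, hx0,
      v6_0, v6_1, v6_2, v6_3, v6_4, v6_5, v6m_0, v6m_1, v6m_2, v6m_3, v6m_4, v6m_5]
    ring
  · show HasFDerivAt (fun x : Fin 6 → ℝ => (1 - bf) * ψ * x 0 - μmu * x 4) _ x0
    refine ((h0.const_mul ((1-bf)*ψ)).sub (h4.const_mul μmu)).congr_fderiv ?_
    refine ContinuousLinearMap.ext fun v => ?_
    simp only [ContinuousLinearMap.comp_apply, ContinuousLinearMap.add_apply,
      ContinuousLinearMap.sub_apply, ContinuousLinearMap.smul_apply,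
      ContinuousLinearMap.neg_apply, ContinuousLinearMap.mulLeftRight_apply,
      ContinuousLinearMap.proj_apply, smul_eq_mul,
      LinearMap.coe_toContinuousLinearMap', Matrix.toLin'_apply, Matrix.mulVec,
      dotProduct, Fin.sum_univ_six, Matrix.of_apply, hx0,
      v6_0, v6_1, v6_2, v6_3, v6_4, v6_5, v6m_0, v6m_1, v6m_2, v6m_3, v6m_4, v6m_5]
    ring
  · show HasFDerivAt (fun x : Fin 6 → ℝ => (1 - bf) * ψ * x 1 - μmw * x 5) _ x0
    refine ((h1.const_mul ((1-bf)*ψ)).sub (h5.const_mul μmw)).congr_fderiv ?_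
    refine ContinuousLinearMap.ext fun v => ?_
    simp only [ContinuousLinearMap.comp_apply, ContinuousLinearMap.add_apply,
      ContinuousLinearMap.sub_apply, ContinuousLinearMap.smul_apply,
      ContinuousLinearMap.neg_apply, ContinuousLinearMap.mulLeftRight_apply,
      ContinuousLinearMap.proj_apply, smul_eq_mul,
      LinearMap.coe_toContinuousLinearMap', Matrix.toLin'_apply, Matrix.mulVec,
      dotProduct, Fin.sum_univ_six, Matrix.of_apply, hx0,
      v6_0, v6_1, v6_2, v6_3, v6_4, v6_5, v6m_0, v6m_1, v6m_2, v6m_3, v6m_4, v6m_5]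
    ring

/-- if `R₀ᵤ > 1` and `R₀ < 1` then every complex eigenvalue of the
6×6 Jacobian matrix of the Wolbachia model at the disease-free equilibrium has
negative real part (local asymptotic stability of the DFE). -/
theorem disease_free_equilibrium_LAS
    (bf vw φu φw ψ μa μfu μfw μmu μmw Ka : ℝ)
    (hbf : 0 < bf) (hbf1 : bf < 1) (hvw0 : 0 < vw) (hvw1 : vw ≤ 1)
    (hφu : 0 < φu) (hφw : 0 < φw) (hψ : 0 < ψ) (hμa : 0 < μa)
    (hμfu : 0 < μfu) (hμfw : 0 < μfw) (hμmu : 0 < μmu) (hμmw : 0 < μmw)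
    (hKa : 0 < Ka)
    (hR0u : 1 < bf * φu * ψ / ((μa + ψ) * μfu))
    (hR0 : Real.sqrt (vw * (φw / μfw) * (μfu / φu)) < 1)
    (Au0 : ℝ) (hAu0 : Au0 = Ka * (1 - 1 / (bf * φu * ψ / ((μa + ψ) * μfu))))
    (x0 : Fin 6 → ℝ)
    (hx0 : x0 = ![Au0, 0, bf * ψ * Au0 / μfu, 0, (1 - bf) * ψ * Au0 / μmu, 0])
    (J : Matrix (Fin 6) (Fin 6) ℝ)
    (hJ : J = LinearMap.toMatrix' (fderiv ℝ
        (wolbField bf vw φu φw ψ μa μfu μfw μmu μmw Ka) x0).toLinearMap) :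
    ∀ lam : ℂ, (J.map Complex.ofReal).charpoly.IsRoot lam → lam.re < 0 := by
  intro lam hlam
  have haψ : 0 < μa + ψ := by linarith
  have hRpos : (1:ℝ) < bf * φu * ψ / ((μa + ψ) * μfu) := hR0u
  have hAu0pos : 0 < Au0 := by
    rw [hAu0]
    have hd : (0:ℝ) < bf * φu * ψ / ((μa + ψ) * μfu) := lt_trans one_pos hR0u
    have h1 : 1 / (bf * φu * ψ / ((μa + ψ) * μfu)) < 1 := by
      rw [div_lt_one hd]; exact hR0u
    have h2 : (0:ℝ) < 1 - 1 / (bf * φu * ψ / ((μa + ψ) * μfu)) := by linarith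
    exact mul_pos hKa h2
  have hFpos : 0 < bf * ψ * Au0 / μfu := by positivity
  have hMpos : 0 < (1 - bf) * ψ * Au0 / μmu := by
    have : 0 < 1 - bf := by linarith
    positivity
  have key : φu * (1 - Au0/Ka) * (bf * ψ) = (μa + ψ) * μfu := by
    rw [hAu0]
    field_simp
    ring
  -- the Jacobian equals the explicit matrix J0
  have hD := jac bf vw φu φw ψ μa μfu μfw μmu μmw Ka Au0
    (bf*ψ*Au0/μfu) ((1-bf)*ψ*Au0/μmu) hKa.ne' hMpos.ne'
  rw [← hx0] at hD
  have hJ0 : J = Matrix.of ![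
      ![-(φu*(bf*ψ*Au0/μfu)/Ka) - (μa+ψ), -(φu*(bf*ψ*Au0/μfu)/Ka), φu*(1-Au0/Ka),
        (1-vw)*(φw*(1-Au0/Ka)), 0, -(φu*(bf*ψ*Au0/μfu)*(1-Au0/Ka)/((1-bf)*ψ*Au0/μmu))],
      ![0, -(μa+ψ), 0, vw*(φw*(1-Au0/Ka)), 0, 0],
      ![bf*ψ, 0, -μfu, 0, 0, 0],
      ![0, bf*ψ, 0, -μfw, 0, 0],
      ![(1-bf)*ψ, 0, 0, 0, -μmu, 0],
      ![0, (1-bf)*ψ, 0, 0, 0, -μmw]] := by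
    rw [hJ, hD.fderiv, LinearMap.coe_toContinuousLinearMap, LinearMap.toMatrix'_toLin']
  -- block factorization of the characteristic polynomial
  have hsub : ((J.map Complex.ofReal).submatrix e6 e6) =
      Matrix.fromBlocks ((Matrix.of ![![-(μa+ψ), vw*(φw*(1-Au0/Ka)), 0], ![bf*ψ, -μfw, 0], ![(1-bf)*ψ, 0, -μmw]]).map Complex.ofReal) 0
        ((Matrix.of ![![-(φu*(bf*ψ*Au0/μfu)/Ka), (1-vw)*(φw*(1-Au0/Ka)), -(φu*(bf*ψ*Au0/μfu)*(1-Au0/Ka)/((1-bf)*ψ*Au0/μmu))], ![0,0,0], ![0,0,0]]).map Complex.ofReal) ((Matrix.of ![![-(φu*(bf*ψ*Au0/μfu)/Ka) - (μa+ψ), φu*(1-Au0/Ka), 0], ![bf*ψ, -μfu, 0], ![(1-bf)*ψ, 0, -μmu]]).map Complex.ofReal) := by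
    rw [hJ0]
    ext i j
    rcases i with i | i <;> rcases j with j | j <;> fin_cases i <;> fin_cases j <;> rfl
  have hfact : (J.map Complex.ofReal).charpoly =
      ((Matrix.of ![![-(μa+ψ), vw*(φw*(1-Au0/Ka)), 0], ![bf*ψ, -μfw, 0], ![(1-bf)*ψ, 0, -μmw]]).map Complex.ofReal).charpoly * ((Matrix.of ![![-(φu*(bf*ψ*Au0/μfu)/Ka) - (μa+ψ), φu*(1-Au0/Ka), 0], ![bf*ψ, -μfu, 0], ![(1-bf)*ψ, 0, -μmu]]).map Complex.ofReal).charpoly := by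
    rw [← Matrix.charpoly_reindex e6.symm (J.map Complex.ofReal),
      Matrix.reindex_apply, Equiv.symm_symm, hsub, Matrix.charpoly_fromBlocks_zero₁₂]
  rw [Polynomial.IsRoot, hfact, Polynomial.eval_mul, mul_eq_zero] at hlam
  -- positivity facts for the quadratic factors
  have ht1 : vw * (φw / μfw) * (μfu / φu) < 1 := by
    have h0t : (0:ℝ) ≤ vw * (φw / μfw) * (μfu / φu) := by positivity
    simpa using (Real.sqrt_lt' one_pos).1 hR0
  have hqw : 0 < (μa+ψ)*μfw - vw*(φw*(1-Au0/Ka))*(bf*ψ) := by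
    have heq : (μa+ψ)*μfw - vw*(φw*(1-Au0/Ka))*(bf*ψ)
        = (μa+ψ)*μfw*(1 - vw * (φw / μfw) * (μfu / φu)) := by
      have h2 : (1 - Au0/Ka)*(bf*ψ) = (μa+ψ)*μfu/φu := by
        rw [eq_div_iff hφu.ne']
        linear_combination key
      calc (μa+ψ)*μfw - vw*(φw*(1-Au0/Ka))*(bf*ψ)
          = (μa+ψ)*μfw - vw*φw*((1-Au0/Ka)*(bf*ψ)) := by ring
        _ = (μa+ψ)*μfw - vw*φw*((μa+ψ)*μfu/φu) := by rw [h2]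
        _ = (μa+ψ)*μfw*(1 - vw * (φw / μfw) * (μfu / φu)) := by
            field_simp
    rw [heq]
    have : 0 < 1 - vw * (φw / μfw) * (μfu / φu) := by linarith
    positivity
  have hqu : 0 < (φu*(bf*ψ*Au0/μfu)/Ka + (μa+ψ))*μfu - φu*(1-Au0/Ka)*(bf*ψ) := by
    have heq : (φu*(bf*ψ*Au0/μfu)/Ka + (μa+ψ))*μfu - φu*(1-Au0/Ka)*(bf*ψ)
        = (φu*(bf*ψ*Au0/μfu)/Ka)*μfu := by linear_combination -key
    rw [heq]
    positivity
  rcases hlam with h | h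
  · -- w-block
    have hW : Polynomial.eval lam ((Matrix.of ![![-(μa+ψ), vw*(φw*(1-Au0/Ka)), 0], ![bf*ψ, -μfw, 0], ![(1-bf)*ψ, 0, -μmw]]).map Complex.ofReal).charpoly
        = (lam + (μmw:ℂ)) * (lam^2 + ((μa+ψ+μfw : ℝ):ℂ)*lam
            + (((μa+ψ)*μfw - vw*(φw*(1-Au0/Ka))*(bf*ψ) : ℝ):ℂ)) := by
      rw [charpoly_eval_fin3]
      simp only [Matrix.map_apply, Matrix.of_apply, Matrix.cons_val_zero,
        Matrix.cons_val_one, Matrix.head_cons, Matrix.cons_val_two, Matrix.tail_cons]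
      push_cast
      ring
    rw [hW] at h
    rcases mul_eq_zero.1 h with h' | h'
    · exact lin_root_re_neg μmw hμmw lam h'
    · exact quad_root_re_neg (μa+ψ+μfw) _ (by linarith) hqw lam h'
  · -- u-block
    have hU : Polynomial.eval lam ((Matrix.of ![![-(φu*(bf*ψ*Au0/μfu)/Ka) - (μa+ψ), φu*(1-Au0/Ka), 0], ![bf*ψ, -μfu, 0], ![(1-bf)*ψ, 0, -μmu]]).map Complex.ofReal).charpoly
        = (lam + (μmu:ℂ)) * (lam^2 + ((φu*(bf*ψ*Au0/μfu)/Ka + (μa+ψ) + μfu : ℝ):ℂ)*lam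
            + (((φu*(bf*ψ*Au0/μfu)/Ka + (μa+ψ))*μfu - φu*(1-Au0/Ka)*(bf*ψ) : ℝ):ℂ)) := by
      rw [charpoly_eval_fin3]
      simp only [Matrix.map_apply, Matrix.of_apply, Matrix.cons_val_zero,
        Matrix.cons_val_one, Matrix.head_cons, Matrix.cons_val_two, Matrix.tail_cons]
      push_cast
      ring
    rw [hU] at h
    rcases mul_eq_zero.1 h with h' | h'
    · exact lin_root_re_neg μmu hμmu lam h'
    · refine quad_root_re_neg _ _ ?_ hqu lam h'
      have : 0 < φu*(bf*ψ*Au0/μfu)/Ka := by positivity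
      linarith
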